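/- Let H be a Hilbert space and let G, K, L be closed subspaces with orthogonal projections p_G, p_K, p_L. Then the following are equivalent: (1) the images of G and L under the projection onto K^⊥ are orthogonal; (2) p_G ∘ p_K ∘ p_L = p_G ∘ p_L; (3) p_L ∘ p_K ∘ p_G = p_L ∘ p_G. -/

import Mathlib

/-- The orthogonal projection onto a closed subspace, as an operator `H →L[ℂ] H`. -/
noncomputable def orthProj {H : Type*} [NormedAddCommGroup H] [InnerProductSpace ℂ H]
    [CompleteSpace H] (K : Submodule ℂ H) (hK : IsClosed (K : Set H)) : H →L[ℂ] H :=
  haveI : CompleteSpace K := hK.completeSpace_coe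
  K.subtypeL.comp (K.orthogonalProjection)

section aux

variable {H : Type*} [NormedAddCommGroup H] [InnerProductSpace ℂ H] [CompleteSpace H]

lemma orthProj_apply (K : Submodule ℂ H) (hK : IsClosed (K : Set H)) (x : H) :
    haveI : CompleteSpace K := hK.completeSpace_coe
    orthProj K hK x = (K.orthogonalProjection x : H) := rfl

lemma inner_orthProj_orthProj (K : Submodule ℂ H) (hK : IsClosed (K : Set H)) (x y : H) :
    (inner ℂ (orthProj K hK x) (orthProj K hK y) : ℂ) = inner ℂ x (orthProj K hK y) := by
  haveI : CompleteSpace K := hK.completeSpace_coe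
  rw [orthProj_apply, orthProj_apply]
  change inner ℂ (K.starProjection x) (K.starProjection y) = inner ℂ x (K.starProjection y)
  rw [Submodule.inner_starProjection_left_eq_right,
    Submodule.starProjection_eq_self_iff.mpr (Submodule.starProjection_apply_mem _ _)]

lemma orthProj_eq_zero_iff (K : Submodule ℂ H) (hK : IsClosed (K : Set H)) {v : H} :
    orthProj K hK v = 0 ↔ v ∈ Kᗮ := by
  haveI : CompleteSpace K := hK.completeSpace_coe
  rw [orthProj_apply]
  constructor
  · intro h
    have : K.orthogonalProjection v = 0 := by exact_mod_cast h
    exact Submodule.orthogonalProjectionOnto_eq_zero_iff.mp this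
  · intro h
    rw [Submodule.orthogonalProjectionOnto_eq_zero_iff.mpr h]; rfl

lemma key_iff (G K L : Submodule ℂ H)
    (hG : IsClosed (G : Set H)) (hK : IsClosed (K : Set H)) (hL : IsClosed (L : Set H)) :
    ((∀ x ∈ G, ∀ y ∈ L,
        (inner ℂ (orthProj Kᗮ K.isClosed_orthogonal x) (orthProj Kᗮ K.isClosed_orthogonal y) : ℂ)
          = 0) ↔
      (orthProj G hG).comp ((orthProj K hK).comp (orthProj L hL))
        = (orthProj G hG).comp (orthProj L hL)) := by
  haveI : CompleteSpace K := hK.completeSpace_coe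
  haveI : CompleteSpace L := hL.completeSpace_coe
  have hQ : ∀ v : H, orthProj Kᗮ K.isClosed_orthogonal v = v - orthProj K hK v := by
    intro v
    rw [orthProj_apply, orthProj_apply]; exact Submodule.starProjection_orthogonal_val v
  have h1 : (∀ x ∈ G, ∀ y ∈ L,
      (inner ℂ (orthProj Kᗮ K.isClosed_orthogonal x) (orthProj Kᗮ K.isClosed_orthogonal y) : ℂ)
        = 0) ↔ ∀ y ∈ L, orthProj Kᗮ K.isClosed_orthogonal y ∈ Gᗮ := by
    constructor
    · intro h y hy
      rw [Submodule.mem_orthogonal]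
      intro x hx
      have := h x hx y hy
      rwa [inner_orthProj_orthProj] at this
    · intro h x hx y hy
      rw [inner_orthProj_orthProj]
      exact (Submodule.mem_orthogonal _ _).mp (h y hy) x hx
  rw [h1]
  constructor
  · intro h
    ext z
    simp only [ContinuousLinearMap.comp_apply]
    have hz : orthProj Kᗮ K.isClosed_orthogonal (orthProj L hL z) ∈ Gᗮ := by
      apply h
      rw [orthProj_apply]; exact Submodule.coe_mem _
    have := (orthProj_eq_zero_iff G hG).mpr hz
    rw [hQ, map_sub] at this
    rw [sub_eq_zero] at this
    exact this.symm
  · intro h y hy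
    have hy' : orthProj L hL y = y := by
      rw [orthProj_apply]
      exact Submodule.starProjection_eq_self_iff.mpr hy
    have := congrFun (congrArg DFunLike.coe h) y
    simp only [ContinuousLinearMap.comp_apply, hy'] at this
    rw [← orthProj_eq_zero_iff G hG, hQ, map_sub, sub_eq_zero]
    exact this.symm

end aux

theorem conditional_orthogonality_tfae
    {H : Type*} [NormedAddCommGroup H] [InnerProductSpace ℂ H] [CompleteSpace H]
    (G K L : Submodule ℂ H)
    (hG : IsClosed (G : Set H)) (hK : IsClosed (K : Set H)) (hL : IsClosed (L : Set H)) :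
    ((∀ x ∈ G, ∀ y ∈ L,
        (inner ℂ (orthProj Kᗮ K.isClosed_orthogonal x) (orthProj Kᗮ K.isClosed_orthogonal y) : ℂ)
          = 0) ↔
      (orthProj G hG).comp ((orthProj K hK).comp (orthProj L hL))
        = (orthProj G hG).comp (orthProj L hL)) ∧
    ((∀ x ∈ G, ∀ y ∈ L,
        (inner ℂ (orthProj Kᗮ K.isClosed_orthogonal x) (orthProj Kᗮ K.isClosed_orthogonal y) : ℂ)
          = 0) ↔
      (orthProj L hL).comp ((orthProj K hK).comp (orthProj G hG))
        = (orthProj L hL).comp (orthProj G hG)) := by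
  refine ⟨key_iff G K L hG hK hL, ?_⟩
  rw [← key_iff L K G hL hK hG]
  constructor
  · intro h x hx y hy
    rw [← inner_conj_symm]
    simp [h y hy x hx]
  · intro h x hx y hy
    rw [← inner_conj_symm]
    simp [h y hy x hx]
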